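/- For every ideal I on a countable set, the following are equivalent: (a) Fin'_ω ⊑ I; (b) Fin'_ω ≤_K I; (c) Fin^{n+1} ⊑ I for all n ∈ ω; (d) Fin^{n+1} ≤_K I for all n ∈ ω. -/

import Mathlib

/-- An ideal on a set `X`: a family of subsets of `X` closed under subsets and
finite unions, containing all finite sets, and proper. -/
structure IdealOn (X : Type*) where
  sets : Set (Set X)
  subset_mem : ∀ ⦃A B : Set X⦄, A ∈ sets → B ⊆ A → B ∈ sets
  union_mem : ∀ ⦃A B : Set X⦄, A ∈ sets → B ∈ sets → A ∪ B ∈ sets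
  finite_mem : ∀ A : Set X, A.Finite → A ∈ sets
  univ_not_mem : Set.univ ∉ sets

/-- The dual filter of an ideal: the family of complements of its members. -/
def IdealOn.dual {X : Type*} (I : IdealOn X) : Set (Set X) := (·ᶜ) '' I.sets

/-- `FinPow n` is the Fubini power `Fin^{n+1}` of the ideal of finite sets, an
ideal on `ω^{n+1}` (represented as `Fin (n+1) → ℕ`). -/
def FinPow : (n : ℕ) → Set (Set (Fin (n + 1) → ℕ))
  | 0 => {A | A.Finite}
  | n + 1 => {A | {k : ℕ | {y : Fin (n + 1) → ℕ | Fin.cons k y ∈ A} ∉ FinPow n}.Finite}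

/-- Projection of `ω^n` onto the last `m` coordinates. -/
def lastProj {m n : ℕ} (h : m ≤ n) (x : Fin n → ℕ) : Fin m → ℕ :=
  fun k => x ⟨n - m + k.val, by have := k.isLt; omega⟩

/-- The inductive limit `Fin_ω` of the Fubini powers `(Fin^n)_{n>0}` along the
projections onto the last coordinates. -/
def FinOmega : Set (Set (Σ n : ℕ, Fin (n + 1) → ℕ)) :=
  {M | ∃ m : ℕ, ∃ P : Set (Fin (m + 1) → ℕ), Pᶜ ∈ FinPow m ∧
    ∀ (n : ℕ) (h : m ≤ n), ∀ x : Fin (n + 1) → ℕ,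
      lastProj (Nat.succ_le_succ h) x ∈ P → (⟨n, x⟩ : Σ n : ℕ, Fin (n + 1) → ℕ) ∉ M}

/-- A system of partitions `{X_s : s ∈ ω^{n+1}}` of `ω` into infinite sets,
with all finite cross-intersections infinite. -/
structure PartitionSystem (X : (n : ℕ) → (Fin (n + 1) → ℕ) → Set ℕ) : Prop where
  infinite : ∀ n s, (X n s).Infinite
  disjoint : ∀ (n : ℕ) (s t : Fin (n + 1) → ℕ), s ≠ t → Disjoint (X n s) (X n t)
  cover : ∀ n : ℕ, (⋃ s, X n s) = Set.univ
  cross : ∀ (F : Finset ℕ) (s : ∀ i : ℕ, Fin (i + 1) → ℕ),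
    (⋂ i ∈ F, X i (s i)).Infinite

/-- The copy `Fin^{n+2}({X_s : s ∈ ω^{n+1}})` on `ω` of the Fubini power,
with partition pieces `X s`. -/
def FinPowCopy {n : ℕ} (X : (Fin (n + 1) → ℕ) → Set ℕ) : Set (Set ℕ) :=
  {A | {s : Fin (n + 1) → ℕ | ¬ (A ∩ X s).Finite} ∈ FinPow n}

/-- `Fin'_ω`: the ideal on `ω` generated by `⋃ n, Fin^{n+2}({X_s : s ∈ ω^{n+1}})`. -/
def FinOmega' (X : (n : ℕ) → (Fin (n + 1) → ℕ) → Set ℕ) : Set (Set ℕ) :=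
  {A | ∃ F : Finset ℕ, ∃ B : ℕ → Set ℕ,
    (∀ n ∈ F, B n ∈ FinPowCopy (X n)) ∧ A ⊆ ⋃ n ∈ F, B n}

section Aux

theorem cons_right_inj (n k : ℕ) :
    Function.Injective (fun y : Fin (n+1) → ℕ => (Fin.cons k y : Fin (n+2) → ℕ)) := by
  intro a b h
  have := congrArg Fin.tail h
  simpa [Fin.tail_cons] using this

theorem snoc_right_inj (n : ℕ) (x : Fin (n+1) → ℕ) :
    Function.Injective (fun j : ℕ => (Fin.snoc x j : Fin (n+2) → ℕ)) := by
  intro a b h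
  have := congrFun h (Fin.last (n+1))
  simpa [Fin.snoc_last] using this

theorem finPow_mono : ∀ (n : ℕ) {A B : Set (Fin (n+1) → ℕ)},
    A ∈ FinPow n → B ⊆ A → B ∈ FinPow n
  | 0, _, _, hA, hBA => Set.Finite.subset hA hBA
  | n+1, A, B, hA, hBA => by
    simp only [FinPow, Set.mem_setOf_eq] at hA ⊢
    refine hA.subset fun k hk => ?_
    simp only [Set.mem_setOf_eq] at hk ⊢
    exact fun h => hk (finPow_mono n h (fun y hy => hBA hy))

theorem finPow_union : ∀ (n : ℕ) {A B : Set (Fin (n+1) → ℕ)},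
    A ∈ FinPow n → B ∈ FinPow n → A ∪ B ∈ FinPow n
  | 0, _, _, hA, hB => Set.Finite.union hA hB
  | n+1, A, B, hA, hB => by
    simp only [FinPow, Set.mem_setOf_eq] at hA hB ⊢
    refine (hA.union hB).subset fun k hk => ?_
    simp only [Set.mem_setOf_eq, Set.mem_union] at hk ⊢
    by_contra h
    push_neg at h
    obtain ⟨h1, h2⟩ := h
    have heq : {y : Fin (n+1) → ℕ | Fin.cons k y ∈ A ∪ B}
        = {y | Fin.cons k y ∈ A} ∪ {y | Fin.cons k y ∈ B} := rfl
    exact hk (heq ▸ finPow_union n h1 h2)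

theorem finPow_finite : ∀ (n : ℕ) {A : Set (Fin (n+1) → ℕ)}, A.Finite → A ∈ FinPow n
  | 0, _, hA => hA
  | n+1, A, hA => by
    simp only [FinPow, Set.mem_setOf_eq]
    have : {k : ℕ | {y : Fin (n+1) → ℕ | Fin.cons k y ∈ A} ∉ FinPow n} = ∅ := by
      ext k
      simp only [Set.mem_setOf_eq, Set.mem_empty_iff_false, iff_false, not_not]
      have hpre : {y : Fin (n+1) → ℕ | Fin.cons k y ∈ A}
          = (fun y : Fin (n+1) → ℕ => (Fin.cons k y : Fin (n+2) → ℕ)) ⁻¹' A := rfl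
      rw [hpre]
      exact finPow_finite n (Set.Finite.preimage ((cons_right_inj n k).injOn) hA)
    rw [this]; exact Set.finite_empty

theorem finPow_univ_notMem : ∀ (n : ℕ), (Set.univ : Set (Fin (n+1) → ℕ)) ∉ FinPow n
  | 0 => fun h => Set.infinite_univ h
  | n+1 => by
    intro h
    simp only [FinPow, Set.mem_setOf_eq] at h
    have : {k : ℕ | {y : Fin (n+1) → ℕ | Fin.cons k y ∈ (Set.univ : Set (Fin (n+2) → ℕ))} ∉ FinPow n}
        = Set.univ := by
      ext k
      simpa using finPow_univ_notMem n
    rw [this] at h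
    exact Set.infinite_univ h

end Aux
section Aux2

theorem cons_eq_snoc_base (k j : ℕ) (x : Fin 1 → ℕ) :
    (Fin.cons k (fun _ => j) : Fin 2 → ℕ) = Fin.snoc x j ↔ x 0 = k := by
  have hsn0 : (Fin.snoc x j : Fin 2 → ℕ) 0 = x 0 := by
    have := Fin.init_snoc (α := fun _ : Fin 2 => ℕ) j x
    exact (congrFun this 0).symm
  constructor
  · intro h
    have h0 := congrFun h 0
    simp only [Fin.cons_zero] at h0
    rw [hsn0] at h0; exact h0.symm
  · intro h
    funext i
    match i with
    | ⟨0, _⟩ =>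
      show k = (Fin.snoc x j : Fin 2 → ℕ) 0
      rw [hsn0, h]
    | ⟨1, _⟩ =>
      have h1 : (Fin.snoc x j : Fin 2 → ℕ) (Fin.last 1) = j := Fin.snoc_last _ _
      exact (h1.symm : (j = _)) 

theorem finPow_succ_iff : ∀ (n : ℕ) (A : Set (Fin (n+2) → ℕ)),
    A ∈ FinPow (n+1) ↔
      {x : Fin (n+1) → ℕ | {j : ℕ | (Fin.snoc x j : Fin (n+2) → ℕ) ∈ A}.Infinite}
        ∈ FinPow n := by
  intro n
  induction n with
  | zero =>
    intro A
    show {k : ℕ | {y : Fin 1 → ℕ | Fin.cons k y ∈ A} ∉ FinPow 0}.Finite ↔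
      {x : Fin 1 → ℕ | {j : ℕ | (Fin.snoc x j : Fin 2 → ℕ) ∈ A}.Infinite}.Finite
    have key : ∀ x : Fin 1 → ℕ,
        {j : ℕ | (Fin.snoc x j : Fin 2 → ℕ) ∈ A}.Infinite ↔
        {y : Fin 1 → ℕ | Fin.cons (x 0) y ∈ A} ∉ FinPow 0 := by
      intro x
      have himg : {y : Fin 1 → ℕ | Fin.cons (x 0) y ∈ A}
          = (fun j : ℕ => (fun _ => j : Fin 1 → ℕ)) ''
              {j : ℕ | (Fin.snoc x j : Fin 2 → ℕ) ∈ A} := by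
        ext y
        simp only [Set.mem_setOf_eq, Set.mem_image]
        constructor
        · intro hy
          refine ⟨y 0, ?_, ?_⟩
          · show (Fin.snoc x (y 0) : Fin 2 → ℕ) ∈ A
            have heq : (Fin.cons (x 0) (fun _ => y 0) : Fin 2 → ℕ) = Fin.snoc x (y 0) :=
              (cons_eq_snoc_base _ _ _).2 rfl
            rw [← heq]
            have hy' : (fun _ => y 0 : Fin 1 → ℕ) = y := by
              funext i; rw [Subsingleton.elim i 0]
            rwa [hy']
          · funext i; rw [Subsingleton.elim i 0]
        · rintro ⟨j, hj, rfl⟩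
          show (Fin.cons (x 0) (fun _ => j) : Fin 2 → ℕ) ∈ A
          rwa [(cons_eq_snoc_base _ _ _).2 rfl]
      have hFP : ({y : Fin 1 → ℕ | Fin.cons (x 0) y ∈ A} ∉ FinPow 0) ↔
          {y : Fin 1 → ℕ | Fin.cons (x 0) y ∈ A}.Infinite := Iff.rfl
      rw [hFP, himg, Set.infinite_image_iff (fun a _ b _ h => congrFun h 0)]
    have hset : {x : Fin 1 → ℕ | {j : ℕ | (Fin.snoc x j : Fin 2 → ℕ) ∈ A}.Infinite}
        = (fun x : Fin 1 → ℕ => x 0) ⁻¹'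
            {k : ℕ | {y : Fin 1 → ℕ | Fin.cons k y ∈ A} ∉ FinPow 0} := by
      ext x
      simp only [Set.mem_setOf_eq, Set.mem_preimage]
      exact key x
    rw [hset]
    constructor
    · intro h
      exact Set.Finite.preimage (fun a _ b _ hab => by
        funext i; rw [Subsingleton.elim i 0]
        exact hab) h
    · intro h
      have himg2 : {k : ℕ | {y : Fin 1 → ℕ | Fin.cons k y ∈ A} ∉ FinPow 0}
          = (fun x : Fin 1 → ℕ => x 0) ''
            ((fun x : Fin 1 → ℕ => x 0) ⁻¹'
              {k : ℕ | {y : Fin 1 → ℕ | Fin.cons k y ∈ A} ∉ FinPow 0}) := by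
        rw [Set.image_preimage_eq]
        intro k
        exact ⟨fun _ => k, rfl⟩
      rw [himg2]
      exact h.image _
  | succ n ih =>
    intro A
    show {k : ℕ | {y : Fin (n+2) → ℕ | Fin.cons k y ∈ A} ∉ FinPow (n+1)}.Finite ↔
      {x : Fin (n+2) → ℕ | {j : ℕ | (Fin.snoc x j : Fin (n+3) → ℕ) ∈ A}.Infinite}
        ∈ FinPow (n+1)
    have hsec : ∀ k : ℕ,
        {y : Fin (n+1) → ℕ |
          Fin.cons k y ∈ {x : Fin (n+2) → ℕ |
            {j : ℕ | (Fin.snoc x j : Fin (n+3) → ℕ) ∈ A}.Infinite}}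
        = {y : Fin (n+1) → ℕ |
            {j : ℕ | (Fin.snoc y j : Fin (n+2) → ℕ)
              ∈ {z : Fin (n+2) → ℕ | Fin.cons k z ∈ A}}.Infinite} := by
      intro k
      ext y
      simp only [Set.mem_setOf_eq]
      have hj : ∀ j : ℕ, ((Fin.snoc (Fin.cons k y) j : Fin (n+3) → ℕ) ∈ A)
          ↔ ((Fin.cons k (Fin.snoc y j : Fin (n+2) → ℕ) : Fin (n+3) → ℕ) ∈ A) := by
        intro j
        rw [Fin.cons_snoc_eq_snoc_cons]
      constructor
      · intro h; exact h.mono (fun j hji => (hj j).1 hji) |>.mono subset_rfl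
      · intro h; exact h.mono (fun j hji => (hj j).2 hji)
    have hpt : ∀ k : ℕ,
        (({y : Fin (n+2) → ℕ | Fin.cons k y ∈ A} ∉ FinPow (n+1)) ↔
          ({y : Fin (n+1) → ℕ |
            Fin.cons k y ∈ {x : Fin (n+2) → ℕ |
              {j : ℕ | (Fin.snoc x j : Fin (n+3) → ℕ) ∈ A}.Infinite}} ∉ FinPow n)) := by
      intro k
      rw [hsec k]
      exact not_congr (ih _)
    have hsets : {k : ℕ | {y : Fin (n+2) → ℕ | Fin.cons k y ∈ A} ∉ FinPow (n+1)}
        = {k : ℕ | {y : Fin (n+1) → ℕ |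
            Fin.cons k y ∈ {x : Fin (n+2) → ℕ |
              {j : ℕ | (Fin.snoc x j : Fin (n+3) → ℕ) ∈ A}.Infinite}} ∉ FinPow n} :=
      Set.ext fun k => hpt k
    rw [hsets]
    exact Iff.rfl

end Aux2
section Aux3

/-- The merging bijection `ω^{n+1} × ω → ω^{n+1}`. -/
def qf : (n : ℕ) → (Fin (n+1) → ℕ) → ℕ → (Fin (n+1) → ℕ)
  | 0 => fun x j _ => Nat.pair (x 0) j
  | n+1 => fun x j => Fin.cons (x 0) (qf n (Fin.tail x) j)

/-- Its inverse. -/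
def pf : (n : ℕ) → (Fin (n+1) → ℕ) → (Fin (n+1) → ℕ) × ℕ
  | 0 => fun z => (fun _ => (Nat.unpair (z 0)).1, (Nat.unpair (z 0)).2)
  | n+1 => fun z => (Fin.cons (z 0) (pf n (Fin.tail z)).1, (pf n (Fin.tail z)).2)

theorem pf_qf : ∀ (n : ℕ) (x : Fin (n+1) → ℕ) (j : ℕ), pf n (qf n x j) = (x, j) := by
  intro n
  induction n with
  | zero =>
    intro x j
    simp only [pf, qf, Nat.unpair_pair]
    refine Prod.ext ?_ rfl
    funext i
    rw [Fin.eq_zero i]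
  | succ n ih =>
    intro x j
    simp only [pf, qf, Fin.cons_zero, Fin.tail_cons, ih (Fin.tail x) j]
    refine Prod.ext ?_ rfl
    simp [Fin.cons_self_tail]

theorem qf_pf : ∀ (n : ℕ) (z : Fin (n+1) → ℕ), qf n (pf n z).1 (pf n z).2 = z := by
  intro n
  induction n with
  | zero =>
    intro z
    funext i
    rw [Fin.eq_zero i]
    simp [qf, pf, Nat.pair_unpair]
  | succ n ih =>
    intro z
    simp only [qf, pf, Fin.cons_zero, Fin.tail_cons, ih (Fin.tail z)]
    simp [Fin.cons_self_tail]

theorem qf_right_inj (n : ℕ) (x : Fin (n+1) → ℕ) :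
    Function.Injective (fun j : ℕ => qf n x j) := by
  intro a b h
  have h2 : pf n (qf n x a) = pf n (qf n x b) := congrArg (pf n) h
  rw [pf_qf, pf_qf] at h2
  exact congrArg Prod.snd h2

theorem qf_prop : ∀ (n : ℕ), ∀ A ∈ FinPow n,
    {x : Fin (n+1) → ℕ | {j : ℕ | qf n x j ∈ A}.Infinite} ∈ FinPow n := by
  intro n
  induction n with
  | zero =>
    intro A hA
    have hempty : {x : Fin 1 → ℕ | {j : ℕ | qf 0 x j ∈ A}.Infinite} = ∅ := by
      ext x
      simp only [Set.mem_setOf_eq, Set.mem_empty_iff_false, iff_false, Set.not_infinite]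
      have hpre : {j : ℕ | qf 0 x j ∈ A} = (fun j => qf 0 x j) ⁻¹' A := rfl
      rw [hpre]
      exact Set.Finite.preimage ((qf_right_inj 0 x).injOn) hA
    rw [hempty]
    exact Set.finite_empty
  | succ n ih =>
    intro A hA
    show {k : ℕ | {y : Fin (n+1) → ℕ |
        Fin.cons k y ∈ {x | {j : ℕ | qf (n+1) x j ∈ A}.Infinite}} ∉ FinPow n}.Finite
    have hAk : {k : ℕ | {y : Fin (n+1) → ℕ | Fin.cons k y ∈ A} ∉ FinPow n}.Finite := hA
    refine hAk.subset fun k hk => ?_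
    simp only [Set.mem_setOf_eq] at hk ⊢
    intro hmem
    apply hk
    have hsec : {y : Fin (n+1) → ℕ | {j : ℕ | qf (n+1) (Fin.cons k y) j ∈ A}.Infinite}
        = {y : Fin (n+1) → ℕ |
            {j : ℕ | qf n y j ∈ {z : Fin (n+1) → ℕ | Fin.cons k z ∈ A}}.Infinite} := by
      ext y
      simp only [Set.mem_setOf_eq]
      have hq : ∀ j : ℕ, qf (n+1) (Fin.cons k y) j = Fin.cons k (qf n y j) := by
        intro j
        simp [qf, Fin.cons_zero, Fin.tail_cons]
      constructor
      · intro h; exact h.mono (fun j hj => by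
          simp only [Set.mem_setOf_eq] at hj ⊢; rwa [← hq j])
      · intro h; exact h.mono (fun j hj => by
          simp only [Set.mem_setOf_eq] at hj ⊢; rwa [hq j])
    show {y : Fin (n+1) → ℕ | {j : ℕ | qf (n+1) (Fin.cons k y) j ∈ A}.Infinite} ∈ FinPow n
    rw [hsec]
    exact ih _ hmem

/-- Every infinite subset of `ω^{n+2}` contains an infinite `FinPow (n+1)` set. -/
theorem exists_infinite_small (n : ℕ) (S : Set (Fin (n+2) → ℕ)) (hS : S.Infinite) :
    ∃ S' : Set (Fin (n+2) → ℕ), S' ⊆ S ∧ S'.Infinite ∧ S' ∈ FinPow (n+1) := by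
  by_cases h : ∃ k : ℕ, {y : Fin (n+1) → ℕ | Fin.cons k y ∈ S}.Infinite
  · obtain ⟨k, hk⟩ := h
    refine ⟨(fun y : Fin (n+1) → ℕ => (Fin.cons k y : Fin (n+2) → ℕ)) ''
      {y | Fin.cons k y ∈ S}, ?_, ?_, ?_⟩
    · rintro _ ⟨y, hy, rfl⟩; exact hy
    · exact hk.image ((cons_right_inj n k).injOn)
    · show {k' : ℕ | {y : Fin (n+1) → ℕ | Fin.cons k' y ∈
          (fun y : Fin (n+1) → ℕ => (Fin.cons k y : Fin (n+2) → ℕ)) ''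
            {y | Fin.cons k y ∈ S}} ∉ FinPow n}.Finite
      refine (Set.finite_singleton k).subset fun k' hk' => ?_
      simp only [Set.mem_setOf_eq] at hk'
      simp only [Set.mem_singleton_iff]
      by_contra hne
      apply hk'
      have hempty : {y : Fin (n+1) → ℕ | Fin.cons k' y ∈
          (fun y : Fin (n+1) → ℕ => (Fin.cons k y : Fin (n+2) → ℕ)) ''
            {y | Fin.cons k y ∈ S}} = ∅ := by
        ext y
        simp only [Set.mem_setOf_eq, Set.mem_image, Set.mem_empty_iff_false, iff_false]
        rintro ⟨y', _, hy'⟩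
        exact hne (congrFun hy' 0).symm
      rw [hempty]
      exact finPow_finite n Set.finite_empty
  · push_neg at h
    refine ⟨S, subset_rfl, hS, ?_⟩
    show {k : ℕ | {y : Fin (n+1) → ℕ | Fin.cons k y ∈ S} ∉ FinPow n}.Finite
    have hempty : {k : ℕ | {y : Fin (n+1) → ℕ | Fin.cons k y ∈ S} ∉ FinPow n} = ∅ := by
      ext k
      simp only [Set.mem_setOf_eq, Set.mem_empty_iff_false, iff_false, not_not]
      exact finPow_finite n (h k)
    rw [hempty]
    exact Set.finite_empty

end Aux3
section Aux4

theorem idealOn_biUnion_mem {Y : Type*} (I : IdealOn Y) (Fs : Finset ℕ) (S : ℕ → Set Y)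
    (h : ∀ n ∈ Fs, S n ∈ I.sets) : (⋃ n ∈ Fs, S n) ∈ I.sets := by
  classical
  induction Fs using Finset.induction with
  | empty => simpa using I.finite_mem ∅ Set.finite_empty
  | @insert a s _ ih =>
    rw [Finset.set_biUnion_insert]
    exact I.union_mem (h a (Finset.mem_insert_self a s))
      (ih fun n hn => h n (Finset.mem_insert_of_mem hn))

theorem idealOn_infinite {Y : Type*} (I : IdealOn Y) : Infinite Y := by
  rcases finite_or_infinite Y with h | h
  · exact absurd (I.finite_mem Set.univ Set.finite_univ) I.univ_not_mem
  · exact h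

/-- (b) implies (d). -/
theorem btod {X : (n : ℕ) → (Fin (n + 1) → ℕ) → Set ℕ} (hX : PartitionSystem X)
    {Y : Type*} (I : IdealOn Y) (f : Y → ℕ)
    (hf : ∀ A ∈ FinOmega' X, f ⁻¹' A ∈ I.sets) (n : ℕ) :
    ∃ g : Y → (Fin (n+1) → ℕ), ∀ A ∈ FinPow n, g ⁻¹' A ∈ I.sets := by
  classical
  have hcov : ∀ m : ℕ, ∃ s : Fin (n+1) → ℕ, m ∈ X n s := by
    intro m
    have := hX.cover n
    have hm : m ∈ ⋃ s, X n s := by rw [this]; trivial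
    exact Set.mem_iUnion.mp hm
  choose c hc using hcov
  refine ⟨fun y => c (f y), fun A hA => ?_⟩
  have hpre : (fun y => c (f y)) ⁻¹' A = f ⁻¹' (c ⁻¹' A) := rfl
  rw [hpre]
  apply hf
  refine ⟨{n}, fun _ => c ⁻¹' A, ?_, ?_⟩
  · intro m hm
    have hm' : m = n := by simpa using hm
    subst hm'
    show {s : Fin (m+1) → ℕ | ¬ ((c ⁻¹' A) ∩ X m s).Finite} ∈ FinPow m
    refine finPow_mono m hA fun s hs => ?_
    simp only [Set.mem_setOf_eq] at hs
    by_contra hsA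
    apply hs
    have hempty : (c ⁻¹' A) ∩ X m s = ∅ := by
      ext a
      simp only [Set.mem_inter_iff, Set.mem_preimage, Set.mem_empty_iff_false, iff_false]
      rintro ⟨haA, haX⟩
      by_cases hca : c a = s
      · exact hsA (hca ▸ haA)
      · exact (hX.disjoint m (c a) s hca).le_bot ⟨hc a, haX⟩
    rw [hempty]
    exact Set.finite_empty
  · intro a ha
    simp only [Set.mem_iUnion, Finset.mem_singleton]
    exact ⟨n, rfl, ha⟩

end Aux4
section Aux5

theorem dtoc {Y : Type*} [Countable Y] (I : IdealOn Y)
    (hd : ∀ n : ℕ, ∃ f : Y → (Fin (n+1) → ℕ), ∀ A ∈ FinPow n, f ⁻¹' A ∈ I.sets)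
    (n : ℕ) :
    ∃ g : Y → (Fin (n+1) → ℕ), Function.Bijective g ∧ ∀ A ∈ FinPow n, g ⁻¹' A ∈ I.sets := by
  classical
  haveI hYinf : Infinite Y := idealOn_infinite I
  match n with
  | 0 =>
    obtain ⟨e⟩ : Nonempty (Y ≃ (Fin 1 → ℕ)) := nonempty_equiv_of_countable
    exact ⟨e, e.bijective, fun A hA =>
      I.finite_mem _ (Set.Finite.preimage (e.injective.injOn) hA)⟩
  | m+1 =>
    obtain ⟨f, hf⟩ := hd (m+2)
    set f₁ : Y → (Fin (m+2) → ℕ) := fun y => Fin.init (f y) with hf₁def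
    have hS : (Set.range f₁).Infinite := by
      by_contra h
      rw [Set.not_infinite] at h
      have h1 : {w : Fin (m+3) → ℕ | Fin.init w ∈ Set.range f₁} ∈ FinPow (m+2) := by
        rw [finPow_succ_iff]
        refine finPow_mono _ (finPow_finite _ h) ?_
        intro x hx
        obtain ⟨j, hj⟩ := hx.nonempty
        simp only [Set.mem_setOf_eq] at hj
        rwa [Fin.init_snoc] at hj
      have h2 : f ⁻¹' {w : Fin (m+3) → ℕ | Fin.init w ∈ Set.range f₁} = Set.univ := by
        ext y
        simp only [Set.mem_preimage, Set.mem_setOf_eq, Set.mem_univ, iff_true]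
        exact ⟨y, rfl⟩
      exact I.univ_not_mem (h2 ▸ hf _ h1)
    obtain ⟨S', hS'sub, hS'inf, hS'mem⟩ := exists_infinite_small m _ hS
    haveI : Infinite ↥S' := hS'inf.to_subtype
    obtain ⟨eS⟩ : Nonempty (↥S' ≃ ((Fin (m+2) → ℕ) × ℕ)) := nonempty_equiv_of_countable
    set r : (Fin (m+2) → ℕ) → (Fin (m+2) → ℕ) :=
      fun x => if h : x ∈ S' then (eS ⟨x, h⟩).1 else x with hrdef
    set φ : Y → (Fin (m+2) → ℕ) := fun y => r (f₁ y) with hφdef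
    set ψ : (Fin (m+2) → ℕ) → (Fin (m+2) → ℕ) := fun w => (pf (m+1) w).1 with hψdef
    have hψq : ∀ (z : Fin (m+2) → ℕ) (j : ℕ), ψ (qf (m+1) z j) = z := by
      intro z j
      show (pf (m+1) (qf (m+1) z j)).1 = z
      rw [pf_qf]
    have hDinf : ∀ z : Fin (m+2) → ℕ, Infinite {y // φ y = z} := by
      intro z
      have hx : ∀ j : ℕ, ∃ y, f₁ y = (eS.symm (z, j)).1 := by
        intro j
        exact hS'sub (eS.symm (z, j)).2
      choose yy hyy using hx
      have hinj : Function.Injective yy := by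
        intro j1 j2 h12
        have hv : (eS.symm (z, j1)).1 = (eS.symm (z, j2)).1 := by
          rw [← hyy j1, ← hyy j2, h12]
        have h2 : eS.symm (z, j1) = eS.symm (z, j2) := Subtype.ext hv
        have h3 := eS.symm.injective h2
        exact (Prod.ext_iff.mp h3).2
      have hmem : ∀ j, φ (yy j) = z := by
        intro j
        have hmm : (eS.symm (z, j)).1 ∈ S' := (eS.symm (z, j)).2
        show r (f₁ (yy j)) = z
        rw [hyy j]
        show (if h : (eS.symm (z, j)).1 ∈ S' then (eS ⟨(eS.symm (z, j)).1, h⟩).1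
          else (eS.symm (z, j)).1) = z
        rw [dif_pos hmm]
        have hsub : (⟨(eS.symm (z, j)).1, hmm⟩ : ↥S') = eS.symm (z, j) := Subtype.ext rfl
        rw [hsub, Equiv.apply_symm_apply]
      exact Infinite.of_injective (fun j => (⟨yy j, hmem j⟩ : {y // φ y = z}))
        (fun a b hab => hinj (congrArg Subtype.val hab))
    have hRinf : ∀ z : Fin (m+2) → ℕ, Infinite {w // ψ w = z} :=
      fun z => Infinite.of_injective
        (fun j => (⟨qf (m+1) z j, hψq z j⟩ : {w // ψ w = z}))
        (fun a b hab => qf_right_inj (m+1) z (congrArg Subtype.val hab))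
    have he : ∀ z : Fin (m+2) → ℕ, Nonempty ({y // φ y = z} ≃ {w // ψ w = z}) := by
      intro z
      haveI := hDinf z; haveI := hRinf z
      exact nonempty_equiv_of_countable
    let e : ∀ z, {y // φ y = z} ≃ {w // ψ w = z} := fun z => Classical.choice (he z)
    let G : Y ≃ (Fin (m+2) → ℕ) :=
      ((Equiv.sigmaFiberEquiv φ).symm.trans (Equiv.sigmaCongrRight e)).trans
        (Equiv.sigmaFiberEquiv ψ)
    have hGval : ∀ y, G y = (e (φ y) ⟨y, rfl⟩).1 := fun y => rfl
    have hGψ : ∀ y, ψ (G y) = φ y := by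
      intro y
      rw [hGval y]
      exact (e (φ y) ⟨y, rfl⟩).2
    refine ⟨G, G.bijective, ?_⟩
    intro A hA
    set T : Set (Fin (m+2) → ℕ) := {z | (A ∩ ψ ⁻¹' {z}).Infinite} with hTdef
    have hT : T ∈ FinPow (m+1) := by
      have h1 := qf_prop (m+1) A hA
      have heq : T = {x | {j : ℕ | qf (m+1) x j ∈ A}.Infinite} := by
        ext z
        simp only [hTdef, Set.mem_setOf_eq]
        constructor
        · intro hinf
          have himg : A ∩ ψ ⁻¹' {z} ⊆ (fun j => qf (m+1) z j) '' {j | qf (m+1) z j ∈ A} := by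
            rintro w ⟨hwA, hwz⟩
            have hwz' : (pf (m+1) w).1 = z := hwz
            refine ⟨(pf (m+1) w).2, ?_, ?_⟩
            · show qf (m+1) z (pf (m+1) w).2 ∈ A
              rw [← hwz', qf_pf]
              exact hwA
            · show qf (m+1) z (pf (m+1) w).2 = w
              rw [← hwz', qf_pf]
          exact (Set.infinite_image_iff ((qf_right_inj (m+1) z).injOn)).mp (hinf.mono himg)
        · intro hinf
          have himg : (fun j => qf (m+1) z j) '' {j | qf (m+1) z j ∈ A} ⊆ A ∩ ψ ⁻¹' {z} := by
            rintro _ ⟨j, hj, rfl⟩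
            exact ⟨hj, hψq z j⟩
          exact (hinf.image ((qf_right_inj (m+1) z).injOn)).mono himg
      rw [heq]
      exact h1
    have hrT : r ⁻¹' T ∈ FinPow (m+1) := by
      refine finPow_mono _ (finPow_union _ hT hS'mem) ?_
      intro x hx
      by_cases h : x ∈ S'
      · exact Or.inr h
      · left
        have : r x = x := by rw [hrdef]; simp only [dif_neg h]
        rwa [← this]
    set L : Set Y := G ⁻¹' A \ f₁ ⁻¹' (r ⁻¹' T) with hLdef
    set B : Set (Fin (m+3) → ℕ) := {w | Fin.init w ∈ r ⁻¹' T} ∪ f '' L with hBdef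
    have hB : B ∈ FinPow (m+2) := by
      rw [finPow_succ_iff]
      refine finPow_mono _ hrT ?_
      intro x hx
      by_contra hxT
      apply hx
      have hzT : ¬ (A ∩ ψ ⁻¹' {r x}).Infinite := hxT
      have hsub : L ∩ f₁ ⁻¹' {x} ⊆ G ⁻¹' (A ∩ ψ ⁻¹' {r x}) := by
        rintro y ⟨hyL, hyx⟩
        have hyx' : f₁ y = x := hyx
        refine ⟨hyL.1, ?_⟩
        show ψ (G y) = r x
        rw [hGψ y]
        show r (f₁ y) = r x
        rw [hyx']
      have hfin1 : (L ∩ f₁ ⁻¹' {x}).Finite :=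
        (Set.Finite.preimage (G.injective.injOn) (Set.not_infinite.mp hzT)).subset hsub
      have hfin2 : ((fun j : ℕ => (Fin.snoc x j : Fin (m+3) → ℕ)) ⁻¹'
          (f '' (L ∩ f₁ ⁻¹' {x}))).Finite :=
        Set.Finite.preimage ((snoc_right_inj _ x).injOn) (hfin1.image f)
      refine hfin2.subset ?_
      intro j hj
      simp only [Set.mem_setOf_eq] at hj
      rcases hj with hj1 | hj2
      · exfalso
        apply hxT
        have hinit : Fin.init (Fin.snoc x j : Fin (m+3) → ℕ) = x := Fin.init_snoc _ _
        simp only [Set.mem_setOf_eq] at hj1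
        rwa [hinit] at hj1
      · obtain ⟨y, hyL, hfy⟩ := hj2
        have hyx : f₁ y = x := by
          show Fin.init (f y) = x
          rw [hfy, Fin.init_snoc]
        exact ⟨y, ⟨hyL, hyx⟩, hfy⟩
    have hGA : G ⁻¹' A ⊆ f ⁻¹' B := by
      intro y hy
      by_cases h : f₁ y ∈ r ⁻¹' T
      · exact Or.inl h
      · exact Or.inr ⟨y, ⟨hy, h⟩, rfl⟩
    exact I.subset_mem (hf _ hB) hGA

end Aux5
section Aux6

theorem key_lemma {Y : Type*} (I : IdealOn Y) {n : ℕ} (Xn : (Fin (n+1) → ℕ) → Set ℕ)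
    (w : Y → (Fin (n+2) → ℕ)) (hw : ∀ A ∈ FinPow (n+1), w ⁻¹' A ∈ I.sets)
    (F : Y → ℕ) (hFinj : Function.Injective F)
    (E : Set Y) (hE : E ∈ I.sets) (hEp : ∀ y ∉ E, F y ∈ Xn (Fin.init (w y)))
    (B : Set ℕ) (hB : B ∈ FinPowCopy Xn) : F ⁻¹' B ∈ I.sets := by
  classical
  set T : Set (Fin (n+1) → ℕ) := {s | ¬ (B ∩ Xn s).Finite} with hTdef
  have hT : T ∈ FinPow n := hB
  set M : Set Y := (F ⁻¹' B \ E) \ (fun y => Fin.init (w y)) ⁻¹' T with hMdef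
  set Cs : Set (Fin (n+2) → ℕ) := {v | Fin.init v ∈ T} ∪ w '' M with hCsdef
  have hCs : Cs ∈ FinPow (n+1) := by
    rw [finPow_succ_iff]
    refine finPow_mono _ hT ?_
    intro x hx
    by_contra hxT
    apply hx
    have hxfin : (B ∩ Xn x).Finite := not_not.mp hxT
    have hsub : M ∩ (fun y => Fin.init (w y)) ⁻¹' {x} ⊆ F ⁻¹' (B ∩ Xn x) := by
      rintro y ⟨hyM, hyx⟩
      have hyx' : Fin.init (w y) = x := hyx
      refine ⟨hyM.1.1, ?_⟩
      have := hEp y hyM.1.2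
      rwa [hyx'] at this
    have hfin1 : (M ∩ (fun y => Fin.init (w y)) ⁻¹' {x}).Finite :=
      (Set.Finite.preimage hFinj.injOn hxfin).subset hsub
    have hfin2 : ((fun j : ℕ => (Fin.snoc x j : Fin (n+2) → ℕ)) ⁻¹'
        (w '' (M ∩ (fun y => Fin.init (w y)) ⁻¹' {x}))).Finite :=
      Set.Finite.preimage ((snoc_right_inj _ x).injOn) (hfin1.image w)
    refine hfin2.subset ?_
    intro j hj
    simp only [Set.mem_setOf_eq] at hj
    rcases hj with hj1 | hj2
    · exfalso
      apply hxT
      have hinit : Fin.init (Fin.snoc x j : Fin (n+2) → ℕ) = x := Fin.init_snoc _ _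
      simp only [Set.mem_setOf_eq] at hj1
      rwa [hinit] at hj1
    · obtain ⟨y, hyM, hwy⟩ := hj2
      have hyx : Fin.init (w y) = x := by rw [hwy, Fin.init_snoc]
      exact ⟨y, ⟨hyM, hyx⟩, hwy⟩
  have hsub2 : F ⁻¹' B ⊆ E ∪ w ⁻¹' Cs := by
    intro y hy
    by_cases h1 : y ∈ E
    · exact Or.inl h1
    by_cases h2 : Fin.init (w y) ∈ T
    · exact Or.inr (Or.inl h2)
    · exact Or.inr (Or.inr ⟨y, ⟨⟨hy, h1⟩, h2⟩, rfl⟩)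
  exact I.subset_mem (I.union_mem hE (hw _ hCs)) hsub2

/-- (c) implies (a). -/
theorem ctoa {X : (n : ℕ) → (Fin (n + 1) → ℕ) → Set ℕ} (hX : PartitionSystem X)
    {Y : Type*} [Countable Y] (I : IdealOn Y)
    (hc : ∀ n : ℕ, ∃ f : Y → (Fin (n + 1) → ℕ), Function.Bijective f ∧
      ∀ A ∈ FinPow n, f ⁻¹' A ∈ I.sets) :
    ∃ F : Y → ℕ, Function.Bijective F ∧ ∀ A ∈ FinOmega' X, F ⁻¹' A ∈ I.sets := by
  classical
  haveI hYinf : Infinite Y := idealOn_infinite I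
  choose w hwbij hwkat using hc
  set g : (n : ℕ) → Y → (Fin (n+1) → ℕ) := fun n y => Fin.init (w (n+1) y) with hgdef
  set s₀ : Fin 1 → ℕ := fun _ => 0 with hs₀def
  set R : Set Y := {y | g 0 y = s₀} with hRdef
  have hsmallset : {v : Fin 2 → ℕ | Fin.init v ∈ ({s₀} : Set (Fin 1 → ℕ))} ∈ FinPow 1 := by
    rw [finPow_succ_iff]
    refine finPow_mono 0 (show ({s₀} : Set (Fin 1 → ℕ)) ∈ FinPow 0 from
      Set.finite_singleton s₀) ?_
    intro x hx
    obtain ⟨j, hj⟩ := hx.nonempty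
    simp only [Set.mem_setOf_eq, Set.mem_singleton_iff] at hj
    rw [Fin.init_snoc] at hj
    simpa using hj
  have hRsmall : R ∈ I.sets := by
    have hpre : R = (w 1) ⁻¹' {v : Fin 2 → ℕ | Fin.init v ∈ ({s₀} : Set (Fin 1 → ℕ))} := rfl
    rw [hpre]
    exact hwkat 1 _ hsmallset
  have hRinf : R.Infinite := by
    have hinf : ({v : Fin 2 → ℕ | Fin.init v ∈ ({s₀} : Set (Fin 1 → ℕ))}).Infinite := by
      refine Set.infinite_of_injective_forall_mem
        (f := fun j : ℕ => (Fin.snoc s₀ j : Fin 2 → ℕ)) (snoc_right_inj 0 s₀) ?_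
      intro j
      simp only [Set.mem_setOf_eq, Set.mem_singleton_iff, Fin.init_snoc]
    have hpre := hinf.preimage (f := w 1) (fun v _ => (hwbij 1).2 v)
    refine hpre.mono ?_
    intro y hy
    simp only [Set.mem_preimage, Set.mem_setOf_eq, Set.mem_singleton_iff] at hy
    exact hy
  have hRcinf : (Rᶜ : Set Y).Infinite := by
    by_contra h
    rw [Set.not_infinite] at h
    refine I.univ_not_mem (I.subset_mem (I.union_mem hRsmall (I.finite_mem _ h)) ?_)
    rw [Set.union_compl_self]
  haveI : Infinite ↥(Rᶜ) := hRcinf.to_subtype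
  haveI : Infinite ↥R := hRinf.to_subtype
  obtain ⟨eA⟩ : Nonempty (ℕ ≃ ↥(Rᶜ)) := nonempty_equiv_of_countable
  set C : ℕ → Set ℕ := fun j => ⋂ i ∈ Finset.range (j+1), X i (g i (eA j).1) with hCdef
  have hC : ∀ j, (C j).Infinite := fun j =>
    hX.cross (Finset.range (j+1)) (fun i => g i (eA j).1)
  set pick : ℕ → ℕ → ℕ := fun j b => Classical.choose ((hC j).exists_gt b) with hpickdef
  have hpick : ∀ j b, pick j b ∈ C j ∧ b < pick j b := by
    intro j b
    obtain ⟨h1, h2⟩ := Classical.choose_spec ((hC j).exists_gt b)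
    exact ⟨h1, h2⟩
  set v : ℕ → ℕ := fun j => Nat.rec (pick 0 0) (fun j ih => pick (j+1) (ih+1)) j with hvdef
  have hv0 : v 0 = pick 0 0 := rfl
  have hvs : ∀ j, v (j+1) = pick (j+1) (v j + 1) := fun j => rfl
  have hvC : ∀ j, v j ∈ C j := by
    intro j
    cases j with
    | zero => exact (hpick 0 0).1
    | succ j => rw [hvs j]; exact (hpick (j+1) (v j + 1)).1
  have hvlt : ∀ j, v j + 1 < v (j+1) := by
    intro j
    rw [hvs j]
    exact (hpick (j+1) (v j + 1)).2
  have hvmono : StrictMono v := strictMono_nat_of_lt_succ (fun j => by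
    have := hvlt j; omega)
  set V : Set ℕ := Set.range v with hVdef
  have hVc : (Vᶜ : Set ℕ).Infinite := by
    refine Set.infinite_of_injective_forall_mem (f := fun j => v j + 1) ?_ ?_
    · intro a b hab
      simp only [add_left_inj] at hab
      exact hvmono.injective hab
    · intro j
      rintro ⟨i, hi⟩
      have hi' : v i = v j + 1 := hi
      rcases le_or_gt i j with h | h
      · have h2 := hvmono.monotone h
        omega
      · have h1 : j + 1 ≤ i := h
        have h2 := hvmono.monotone h1
        have h3 := hvlt j
        omega
  haveI : Infinite ↥(Vᶜ : Set ℕ) := hVc.to_subtype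
  obtain ⟨eR⟩ : Nonempty (↥R ≃ ↥(Vᶜ : Set ℕ)) := nonempty_equiv_of_countable
  set F : Y → ℕ := fun y => if h : y ∈ R then ((eR ⟨y, h⟩ : ↥(Vᶜ : Set ℕ)) : ℕ)
    else v (eA.symm ⟨y, h⟩) with hFdef
  have hFR : ∀ y (h : y ∈ R), F y = ((eR ⟨y, h⟩ : ↥(Vᶜ : Set ℕ)) : ℕ) := by
    intro y h; simp only [hFdef, dif_pos h]
  have hFnR : ∀ y (h : y ∉ R), F y = v (eA.symm ⟨y, h⟩) := by
    intro y h; simp only [hFdef, dif_neg h]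
  have hFinj : Function.Injective F := by
    intro y1 y2 h12
    by_cases h1 : y1 ∈ R <;> by_cases h2 : y2 ∈ R
    · rw [hFR y1 h1, hFR y2 h2] at h12
      have := eR.injective (Subtype.ext h12)
      exact congrArg Subtype.val this
    · exfalso
      rw [hFR y1 h1, hFnR y2 h2] at h12
      exact (eR ⟨y1, h1⟩).2 ⟨eA.symm ⟨y2, h2⟩, h12.symm⟩
    · exfalso
      rw [hFnR y1 h1, hFR y2 h2] at h12
      exact (eR ⟨y2, h2⟩).2 ⟨eA.symm ⟨y1, h1⟩, h12⟩
    · rw [hFnR y1 h1, hFnR y2 h2] at h12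
      have h3 := hvmono.injective h12
      have h6 := congrArg eA h3
      rw [Equiv.apply_symm_apply, Equiv.apply_symm_apply] at h6
      exact congrArg Subtype.val h6
  have hFsurj : Function.Surjective F := by
    intro m
    by_cases hm : m ∈ V
    · obtain ⟨j, hj⟩ := hm
      have hy : (eA j).1 ∈ Rᶜ := (eA j).2
      refine ⟨(eA j).1, ?_⟩
      rw [hFnR (eA j).1 hy]
      have : (⟨(eA j).1, hy⟩ : ↥(Rᶜ)) = eA j := Subtype.ext rfl
      rw [this, Equiv.symm_apply_apply]
      exact hj
    · have hy : (eR.symm ⟨m, hm⟩).1 ∈ R := (eR.symm ⟨m, hm⟩).2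
      refine ⟨(eR.symm ⟨m, hm⟩).1, ?_⟩
      rw [hFR _ hy]
      have : (⟨(eR.symm ⟨m, hm⟩).1, hy⟩ : ↥R) = eR.symm ⟨m, hm⟩ := Subtype.ext rfl
      rw [this, Equiv.apply_symm_apply]
  set E : ℕ → Set Y := fun n => R ∪ {y | ∃ h : y ∉ R, (eA.symm ⟨y, h⟩ : ℕ) < n} with hEdef
  have hEsmall : ∀ n, E n ∈ I.sets := by
    intro n
    refine I.union_mem hRsmall (I.finite_mem _ ?_)
    refine Set.Finite.subset ((Set.finite_Iio n).image (fun j => (eA j).1)) ?_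
    rintro y ⟨h, hlt⟩
    refine ⟨eA.symm ⟨y, h⟩, hlt, ?_⟩
    show (eA (eA.symm ⟨y, h⟩)).1 = y
    rw [Equiv.apply_symm_apply]
  have hEprop : ∀ n y, y ∉ E n → F y ∈ X n (g n y) := by
    intro n y hy
    have h1 : y ∉ R := fun h => hy (Or.inl h)
    have h2 : ¬ (eA.symm ⟨y, h1⟩ : ℕ) < n := fun h => hy (Or.inr ⟨h1, h⟩)
    rw [hFnR y h1]
    set j : ℕ := eA.symm ⟨y, h1⟩ with hjdef
    have hval : (eA j).1 = y := by rw [hjdef, Equiv.apply_symm_apply]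
    have hmem := hvC j
    rw [hCdef] at hmem
    have hnj : n ∈ Finset.range (j+1) := Finset.mem_range.mpr (by omega)
    have := Set.mem_iInter₂.mp hmem n hnj
    rwa [hval] at this
  refine ⟨F, ⟨hFinj, hFsurj⟩, ?_⟩
  rintro A ⟨Fs, Bs, hBs, hsubA⟩
  have hsub3 : F ⁻¹' A ⊆ ⋃ n ∈ Fs, F ⁻¹' (Bs n) := by
    intro y hy
    have := hsubA hy
    simp only [Set.mem_iUnion] at this ⊢
    obtain ⟨n, hn, hmem⟩ := this
    exact ⟨n, hn, hmem⟩
  refine I.subset_mem (idealOn_biUnion_mem I Fs _ ?_) hsub3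
  intro n hn
  exact key_lemma I (X n) (w (n+1)) (hwkat (n+1)) F hFinj (E n) (hEsmall n)
    (fun y hy => hEprop n y hy) (Bs n) (hBs n hn)

end Aux6
/-- For every ideal `I` on a countable set, the following are
equivalent: (a) `Fin'_ω ⊑ I`; (b) `Fin'_ω ≤_K I`; (c) `Fin^{n+1} ⊑ I` for all
`n`; (d) `Fin^{n+1} ≤_K I` for all `n`. -/
theorem finOmega'_characterization (X : (n : ℕ) → (Fin (n + 1) → ℕ) → Set ℕ)
    (hX : PartitionSystem X) {Y : Type*} [Countable Y] (I : IdealOn Y) :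
    ((∃ f : Y → ℕ, Function.Bijective f ∧ ∀ A ∈ FinOmega' X, f ⁻¹' A ∈ I.sets) ↔
      (∃ f : Y → ℕ, ∀ A ∈ FinOmega' X, f ⁻¹' A ∈ I.sets)) ∧
    ((∃ f : Y → ℕ, ∀ A ∈ FinOmega' X, f ⁻¹' A ∈ I.sets) ↔
      (∀ n : ℕ, ∃ f : Y → (Fin (n + 1) → ℕ), Function.Bijective f ∧
        ∀ A ∈ FinPow n, f ⁻¹' A ∈ I.sets)) ∧
    ((∀ n : ℕ, ∃ f : Y → (Fin (n + 1) → ℕ), Function.Bijective f ∧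
        ∀ A ∈ FinPow n, f ⁻¹' A ∈ I.sets) ↔
      (∀ n : ℕ, ∃ f : Y → (Fin (n + 1) → ℕ), ∀ A ∈ FinPow n, f ⁻¹' A ∈ I.sets)) := by
  refine ⟨⟨fun h => h.elim (fun f hf => ⟨f, hf.2⟩), fun hb => ?_⟩,
    ⟨fun hb => ?_, fun hcc => (ctoa hX I hcc).elim (fun f hf => ⟨f, hf.2⟩)⟩,
    ⟨fun hcc n => (hcc n).imp (fun f hf => hf.2), fun hd n => dtoc I hd n⟩⟩
  · obtain ⟨f, hf⟩ := hb
    exact ctoa hX I (fun n => dtoc I (fun k => btod hX I f hf k) n)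
  · obtain ⟨f, hf⟩ := hb
    exact fun n => dtoc I (fun k => btod hX I f hf k) n
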